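/- The map λ ↦ |h(λ)⟩ := √(1 − f(λ)² − g(λ)²)|nothing⟩ + f(λ)|well⟩ + g(λ)|ill⟩ (a unit vector in ℝ³ with the three orthonormal basis vectors |nothing⟩, |well⟩, |ill⟩) is (π/2)κ-Lipschitz: for all λ₁, λ₂ in (0, 1], ‖|h(λ₁)⟩ − |h(λ₂)⟩‖ ≤ (π/2)·κ·|λ₁ − λ₂|. -/

import Mathlib

set_option maxHeartbeats 1000000
open Real

/-- The HHL filter function `f` with parameter `κ` and `κ' = 2κ`. -/
noncomputable def hhlF (κ l : ℝ) : ℝ :=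
  if 1/κ ≤ l then 1/(2*κ*l)
  else if 1/(2*κ) ≤ l then
    (1/2) * Real.sin ((Real.pi/2) * ((l - 1/(2*κ)) / (1/κ - 1/(2*κ))))
  else 0

/-- The HHL filter function `g` with parameter `κ` and `κ' = 2κ`. -/
noncomputable def hhlG (κ l : ℝ) : ℝ :=
  if 1/κ ≤ l then 0
  else if 1/(2*κ) ≤ l then
    (1/2) * Real.cos ((Real.pi/2) * ((l - 1/(2*κ)) / (1/κ - 1/(2*κ))))
  else 1/2

/-- The unit vector `|h(λ)⟩ = √(1 − f(λ)² − g(λ)²)|nothing⟩ + f(λ)|well⟩ + g(λ)|ill⟩`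
in `ℝ³` (with `|nothing⟩, |well⟩, |ill⟩` the standard orthonormal basis). -/
noncomputable def hhlH (κ l : ℝ) : EuclideanSpace ℝ (Fin 3) :=
  (WithLp.equiv 2 (Fin 3 → ℝ)).symm
    ![Real.sqrt (1 - hhlF κ l ^ 2 - hhlG κ l ^ 2), hhlF κ l, hhlG κ l]

lemma hhl_eq3 {κ l : ℝ} (hκ : 1 ≤ κ) (hl : l ≤ 1/(2*κ)) :
    hhlF κ l = 0 ∧ hhlG κ l = 1/2 := by
  have hκ0 : (0:ℝ) < κ := by linarith
  have h1 : ¬ (1/κ ≤ l) := by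
    push_neg
    have : 1/(2*κ) < 1/κ := by
      rw [div_lt_div_iff₀ (by positivity) hκ0]; nlinarith
    linarith
  rcases eq_or_lt_of_le hl with h | h
  · rw [hhlF, hhlG, if_neg h1, if_neg h1, if_pos (le_of_eq h.symm),
      if_pos (le_of_eq h.symm), h]
    simp
  · rw [hhlF, hhlG, if_neg h1, if_neg h1, if_neg (not_le.2 h), if_neg (not_le.2 h)]
    simp

lemma hhl_eq2 {κ l : ℝ} (hκ : 1 ≤ κ) (hl : 1/(2*κ) ≤ l) (hl' : l ≤ 1/κ) :
    hhlF κ l = (1/2) * Real.sin (Real.pi * κ * (l - 1/(2*κ))) ∧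
    hhlG κ l = (1/2) * Real.cos (Real.pi * κ * (l - 1/(2*κ))) := by
  have hκ0 : (0:ℝ) < κ := by linarith
  have harg : (Real.pi/2) * ((l - 1/(2*κ)) / (1/κ - 1/(2*κ)))
      = Real.pi * κ * (l - 1/(2*κ)) := by
    have : 1/κ - 1/(2*κ) = 1/(2*κ) := by field_simp; ring
    rw [this]; field_simp
  rcases eq_or_lt_of_le hl' with h | h
  · have harg2 : Real.pi * κ * (l - 1/(2*κ)) = Real.pi/2 := by
      rw [h]; field_simp; ring
    rw [hhlF, hhlG, if_pos (le_of_eq h.symm), if_pos (le_of_eq h.symm), harg2, h]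
    rw [Real.sin_pi_div_two, Real.cos_pi_div_two]
    constructor
    · field_simp
    · simp
  · rw [hhlF, hhlG, if_neg (not_le.2 h), if_neg (not_le.2 h), if_pos hl, if_pos hl,
      harg]
    exact ⟨rfl, rfl⟩

lemma hhl_eq1 {κ l : ℝ} (hl : 1/κ ≤ l) :
    hhlF κ l = 1/(2*κ*l) ∧ hhlG κ l = 0 := by
  rw [hhlF, hhlG, if_pos hl, if_pos hl]
  exact ⟨rfl, rfl⟩

lemma norm_hhlH_sub (κ l₁ l₂ : ℝ) :
    ‖hhlH κ l₁ - hhlH κ l₂‖ = Real.sqrt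
      ((Real.sqrt (1 - hhlF κ l₁^2 - hhlG κ l₁^2)
          - Real.sqrt (1 - hhlF κ l₂^2 - hhlG κ l₂^2))^2
        + (hhlF κ l₁ - hhlF κ l₂)^2 + (hhlG κ l₁ - hhlG κ l₂)^2) := by
  rw [EuclideanSpace.norm_eq]
  congr 1
  simp [hhlH, Fin.sum_univ_three, sq_abs]

lemma pi_sq_ge_two : (2:ℝ) ≤ Real.pi ^ 2 := by nlinarith [Real.pi_gt_three]

lemma two_sub_two_cos (x : ℝ) : 2 - 2 * Real.cos x ≤ x ^ 2 := by
  have h1 := Real.sin_sq_le_sq (x := x/2)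
  have h3 := Real.cos_two_mul (x/2)
  have h4 := Real.sin_sq_add_cos_sq (x/2)
  rw [show (2:ℝ)*(x/2) = x by ring] at h3
  nlinarith [sq_nonneg (x/2)]

lemma bound3 {κ l₁ l₂ : ℝ} (hκ : 1 ≤ κ) (h1 : l₁ ≤ 1/(2*κ)) (h2 : l₂ ≤ 1/(2*κ)) :
    hhlH κ l₁ = hhlH κ l₂ := by
  obtain ⟨hf1, hg1⟩ := hhl_eq3 hκ h1
  obtain ⟨hf2, hg2⟩ := hhl_eq3 hκ h2
  simp [hhlH, hf1, hg1, hf2, hg2]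

lemma bound2 {κ l₁ l₂ : ℝ} (hκ : 1 ≤ κ)
    (hb1 : 1/(2*κ) ≤ l₁) (hc1 : l₁ ≤ 1/κ) (hb2 : 1/(2*κ) ≤ l₂) (hc2 : l₂ ≤ 1/κ) :
    ‖hhlH κ l₁ - hhlH κ l₂‖ ≤ (Real.pi / 2) * κ * |l₁ - l₂| := by
  have hκ0 : (0:ℝ) < κ := by linarith
  obtain ⟨hf1, hg1⟩ := hhl_eq2 hκ hb1 hc1
  obtain ⟨hf2, hg2⟩ := hhl_eq2 hκ hb2 hc2
  set θ₁ := Real.pi * κ * (l₁ - 1/(2*κ)) with hθ₁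
  set θ₂ := Real.pi * κ * (l₂ - 1/(2*κ)) with hθ₂
  rw [norm_hhlH_sub, hf1, hg1, hf2, hg2]
  have e1 : 1 - (1/2 * Real.sin θ₁)^2 - (1/2 * Real.cos θ₁)^2 = 3/4 := by
    nlinarith [Real.sin_sq_add_cos_sq θ₁]
  have e2 : 1 - (1/2 * Real.sin θ₂)^2 - (1/2 * Real.cos θ₂)^2 = 3/4 := by
    nlinarith [Real.sin_sq_add_cos_sq θ₂]
  rw [e1, e2, sub_self]
  have hC : (0:ℝ) ≤ (Real.pi / 2) * κ * |l₁ - l₂| := by positivity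
  rw [show ((Real.pi / 2) * κ * |l₁ - l₂|) = Real.sqrt (((Real.pi / 2) * κ * |l₁ - l₂|)^2)
    by rw [Real.sqrt_sq hC]]
  apply Real.sqrt_le_sqrt
  have key : (1/2 * Real.sin θ₁ - 1/2 * Real.sin θ₂)^2 + (1/2 * Real.cos θ₁ - 1/2 * Real.cos θ₂)^2 = (2 - 2 * Real.cos (θ₁ - θ₂)) / 4 := by
    rw [Real.cos_sub]
    nlinarith [Real.sin_sq_add_cos_sq θ₁, Real.sin_sq_add_cos_sq θ₂]
  have hθ : θ₁ - θ₂ = Real.pi * κ * (l₁ - l₂) := by rw [hθ₁, hθ₂]; ring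
  have h2 := two_sub_two_cos (θ₁ - θ₂)
  rw [hθ] at h2
  rw [hθ] at key
  have habs' : ((Real.pi / 2) * κ * |l₁ - l₂|)^2 = (Real.pi * κ * (l₁ - l₂))^2 / 4 := by
    rw [mul_pow, mul_pow, sq_abs]; ring
  rw [habs']
  norm_num
  linarith [key, h2]

lemma bound1 {κ l₁ l₂ : ℝ} (hκ : 1 ≤ κ) (h1 : 1/κ ≤ l₁) (h2 : 1/κ ≤ l₂) :
    ‖hhlH κ l₁ - hhlH κ l₂‖ ≤ (Real.pi / 2) * κ * |l₁ - l₂| := by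
  have hκ0 : (0:ℝ) < κ := by linarith
  have hl1 : 0 < l₁ := lt_of_lt_of_le (by positivity) h1
  have hl2 : 0 < l₂ := lt_of_lt_of_le (by positivity) h2
  obtain ⟨hf1, hg1⟩ := hhl_eq1 (l := l₁) h1
  obtain ⟨hf2, hg2⟩ := hhl_eq1 (l := l₂) h2
  rw [norm_hhlH_sub, hf1, hg1, hf2, hg2]
  set f₁ : ℝ := 1/(2*κ*l₁) with hF1
  set f₂ : ℝ := 1/(2*κ*l₂) with hF2
  have hk1 : 1 ≤ l₁ * κ := (div_le_iff₀ hκ0).1 h1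
  have hk2 : 1 ≤ l₂ * κ := (div_le_iff₀ hκ0).1 h2
  have hf1p : 0 < f₁ := by rw [hF1]; positivity
  have hf2p : 0 < f₂ := by rw [hF2]; positivity
  have hf1h : f₁ ≤ 1/2 := by
    rw [hF1, div_le_div_iff₀ (by positivity) (by norm_num)]; nlinarith
  have hf2h : f₂ ≤ 1/2 := by
    rw [hF2, div_le_div_iff₀ (by positivity) (by norm_num)]; nlinarith
  set a₁ : ℝ := Real.sqrt (1 - f₁^2 - 0^2) with hA1
  set a₂ : ℝ := Real.sqrt (1 - f₂^2 - 0^2) with hA2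
  have ha1n : 0 ≤ a₁ := Real.sqrt_nonneg _
  have ha2n : 0 ≤ a₂ := Real.sqrt_nonneg _
  have ha1 : a₁^2 = 1 - f₁^2 := by
    rw [hA1, Real.sq_sqrt (by nlinarith)]; ring
  have ha2 : a₂^2 = 1 - f₂^2 := by
    rw [hA2, Real.sq_sqrt (by nlinarith)]; ring
  have hfa1 : f₁ ≤ a₁ := by nlinarith [sq_nonneg (a₁ - f₁), sq_nonneg (a₁ + f₁)]
  have hfa2 : f₂ ≤ a₂ := by nlinarith [sq_nonneg (a₂ - f₂), sq_nonneg (a₂ + f₂)]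
  -- |Δa| ≤ |Δf|
  have hprod : (a₁ - a₂) * (a₁ + a₂) = (f₂ - f₁) * (f₂ + f₁) := by nlinarith [ha1, ha2]
  have hsq : (a₁ - a₂)^2 * (a₁ + a₂)^2 = (f₁ - f₂)^2 * (f₁ + f₂)^2 := by
    linear_combination ((a₁ - a₂) * (a₁ + a₂) + (f₂ - f₁) * (f₂ + f₁)) * hprod
  have hda : (a₁ - a₂)^2 ≤ (f₁ - f₂)^2 := by
    have hs : (f₁ + f₂)^2 ≤ (a₁ + a₂)^2 := by nlinarith
    have hsp : (0:ℝ) < (a₁ + a₂)^2 := by nlinarith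
    nlinarith [mul_le_mul_of_nonneg_left hs (sq_nonneg (f₁ - f₂))]
  -- |Δf| ≤ (κ/2)|Δl|
  have hdf : (f₁ - f₂)^2 ≤ (κ/2)^2 * (l₁ - l₂)^2 := by
    have hfe : f₁ - f₂ = (l₂ - l₁) / (2*κ*l₁*l₂) := by
      rw [hF1, hF2]; field_simp
    rw [hfe, div_pow, div_le_iff₀ (by positivity)]
    have h11 : 1 ≤ (l₁ * κ) * (l₂ * κ) := by nlinarith
    nlinarith [sq_nonneg (l₁ - l₂), sq_nonneg ((l₁-l₂) * (l₁*κ*(l₂*κ) - 1)),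
      mul_le_mul h11 h11 (by norm_num) (by positivity)]
  have hC : (0:ℝ) ≤ (Real.pi / 2) * κ * |l₁ - l₂| := by positivity
  rw [show ((Real.pi / 2) * κ * |l₁ - l₂|) = Real.sqrt (((Real.pi / 2) * κ * |l₁ - l₂|)^2)
    by rw [Real.sqrt_sq hC]]
  apply Real.sqrt_le_sqrt
  have hpi : (3:ℝ) < Real.pi := Real.pi_gt_three
  have habs' : ((Real.pi / 2) * κ * |l₁ - l₂|)^2 = Real.pi^2 * κ^2 * (l₁ - l₂)^2 / 4 := by
    rw [mul_pow, mul_pow, sq_abs]; ring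
  rw [habs']
  have hkey : (0:ℝ) ≤ (Real.pi^2 - 2) * (κ^2 * (l₁ - l₂)^2) :=
    mul_nonneg (sub_nonneg.2 pi_sq_ge_two) (mul_nonneg (sq_nonneg κ) (sq_nonneg (l₁ - l₂)))
  linarith [hda, hdf, hkey]

lemma hhl_tri (x y z : EuclideanSpace ℝ (Fin 3)) : ‖x - z‖ ≤ ‖x - y‖ + ‖y - z‖ := by
  simpa [dist_eq_norm] using dist_triangle x y z

lemma hhl_main {κ : ℝ} (hκ : 1 ≤ κ) {l₁ l₂ : ℝ} (h0 : 0 < l₁) (hle : l₁ ≤ l₂) :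
    ‖hhlH κ l₁ - hhlH κ l₂‖ ≤ (Real.pi / 2) * κ * |l₁ - l₂| := by
  have hκ0 : (0:ℝ) < κ := by linarith
  have hCpos : (0:ℝ) ≤ (Real.pi / 2) * κ := by positivity
  have hbc : 1/(2*κ) ≤ 1/κ := by
    rw [div_le_div_iff₀ (by positivity) hκ0]; nlinarith
  have habs : |l₁ - l₂| = l₂ - l₁ := by
    rw [abs_sub_comm, abs_of_nonneg (by linarith)]
  rw [habs]
  rcases le_or_gt l₂ (1/(2*κ)) with h2b | h2b
  · rw [bound3 hκ (le_trans hle h2b) h2b, sub_self, norm_zero]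
    exact mul_nonneg hCpos (by linarith)
  rcases le_or_gt l₁ (1/(2*κ)) with h1b | h1b
  · have e0 : hhlH κ l₁ = hhlH κ (1/(2*κ)) := bound3 hκ h1b le_rfl
    rcases le_or_gt l₂ (1/κ) with h2c | h2c
    · have hB := bound2 hκ (le_refl (1/(2*κ))) hbc h2b.le h2c
      rw [abs_sub_comm, abs_of_nonneg (by linarith)] at hB
      calc ‖hhlH κ l₁ - hhlH κ l₂‖ = ‖hhlH κ (1/(2*κ)) - hhlH κ l₂‖ := by rw [e0]
        _ ≤ (Real.pi / 2) * κ * (l₂ - 1/(2*κ)) := hB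
        _ ≤ (Real.pi / 2) * κ * (l₂ - l₁) :=
            mul_le_mul_of_nonneg_left (by linarith) hCpos
    · have hB1 := bound2 hκ (le_refl (1/(2*κ))) hbc hbc le_rfl
      have hB2 := bound1 hκ (le_refl (1/κ)) h2c.le
      rw [abs_sub_comm, abs_of_nonneg (by linarith)] at hB1
      rw [abs_sub_comm, abs_of_nonneg (by linarith)] at hB2
      calc ‖hhlH κ l₁ - hhlH κ l₂‖ = ‖hhlH κ (1/(2*κ)) - hhlH κ l₂‖ := by rw [e0]
        _ ≤ ‖hhlH κ (1/(2*κ)) - hhlH κ (1/κ)‖ + ‖hhlH κ (1/κ) - hhlH κ l₂‖ :=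
            hhl_tri _ _ _
        _ ≤ (Real.pi / 2) * κ * (1/κ - 1/(2*κ)) + (Real.pi / 2) * κ * (l₂ - 1/κ) :=
            add_le_add hB1 hB2
        _ ≤ (Real.pi / 2) * κ * (l₂ - l₁) := by
            have h := mul_le_mul_of_nonneg_left
              (show l₂ - 1/(2*κ) ≤ l₂ - l₁ by linarith) hCpos
            nlinarith [h]
  · rcases le_or_gt l₂ (1/κ) with h2c | h2c
    · have hB := bound2 hκ h1b.le (le_trans hle h2c) (le_trans h1b.le hle) h2c
      rwa [habs] at hB
    rcases le_or_gt l₁ (1/κ) with h1c | h1c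
    · have hB1 := bound2 hκ h1b.le h1c hbc le_rfl
      have hB2 := bound1 hκ (le_refl (1/κ)) h2c.le
      rw [abs_sub_comm, abs_of_nonneg (by linarith)] at hB1
      rw [abs_sub_comm, abs_of_nonneg (by linarith)] at hB2
      calc ‖hhlH κ l₁ - hhlH κ l₂‖
          ≤ ‖hhlH κ l₁ - hhlH κ (1/κ)‖ + ‖hhlH κ (1/κ) - hhlH κ l₂‖ := hhl_tri _ _ _
        _ ≤ (Real.pi / 2) * κ * (1/κ - l₁) + (Real.pi / 2) * κ * (l₂ - 1/κ) :=
            add_le_add hB1 hB2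
        _ ≤ (Real.pi / 2) * κ * (l₂ - l₁) := by nlinarith [hCpos]
    · have hB := bound1 hκ h1c.le (le_trans h1c.le hle)
      rwa [habs] at hB

theorem hhlH_lipschitz (κ : ℝ) (hκ : 1 ≤ κ) :
    ∀ l₁ l₂ : ℝ, 0 < l₁ → l₁ ≤ 1 → 0 < l₂ → l₂ ≤ 1 →
      ‖hhlH κ l₁ - hhlH κ l₂‖ ≤ (Real.pi / 2) * κ * |l₁ - l₂| := by
  intro l₁ l₂ h1 _ h2 _
  rcases le_total l₁ l₂ with h | h
  · exact hhl_main hκ h1 h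
  · rw [norm_sub_rev, abs_sub_comm]
    exact hhl_main hκ h2 h
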